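/- arXiv:2001.00701 — 2 statements merged into one kernel-verified Lean document; each statement's English description precedes it below -/
import Mathlib

section
/- Let δ ∈ ℂ. For 𝔰𝔩₂, the Casimir operator on the tensor product L₁ ⊗ E of the 2-dimensional irreducible module L₁ with a module E on which the Casimir acts by δ and which has one-dimensional weight spaces, has eigenvalues δ± = ½(2δ+1) ± √(2δ+1) on each weight space. In particular, for δ = −3/8 the eigenvalues are −3/8 and 5/8. -/
/-- From a linearly independent pair, get a dual functional hitting 1 and 0. -/
lemma exists_dual_pair_aux {V : Type*} [AddCommGroup V] [Module ℂ V]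
    (x y : V) (hxy : LinearIndependent ℂ ![x, y]) :
    ∃ φ : V →ₗ[ℂ] ℂ, φ x = 1 ∧ φ y = 0 := by
  set p := Submodule.span ℂ (Set.range ![x, y])
  let f0 : p →ₗ[ℂ] ℂ := (Finsupp.lapply (0 : Fin 2)) ∘ₗ (hxy.repr : p →ₗ[ℂ] (Fin 2 →₀ ℂ))
  obtain ⟨φ, hφ⟩ := LinearMap.exists_extend f0
  have hx : x ∈ p := Submodule.subset_span ⟨0, rfl⟩
  have hy : y ∈ p := Submodule.subset_span ⟨1, rfl⟩
  refine ⟨φ, ?_, ?_⟩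
  · have := congrArg (fun g => g ⟨x, hx⟩) hφ
    simp only [LinearMap.comp_apply, Submodule.subtype_apply] at this
    have h0 : hxy.repr ⟨x, hx⟩ = Finsupp.single 0 1 := hxy.repr_eq_single 0 _ (by simp)
    simpa [f0, h0] using this
  · have := congrArg (fun g => g ⟨y, hy⟩) hφ
    simp only [LinearMap.comp_apply, Submodule.subtype_apply] at this
    have h1 : hxy.repr ⟨y, hy⟩ = Finsupp.single 1 1 := hxy.repr_eq_single 1 _ (by simp)
    simpa [f0, h1] using this

lemma two_smul_add_smul_ne_zero_aux {V E : Type*} [AddCommGroup V] [Module ℂ V]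
    [AddCommGroup E] [Module ℂ E]
    (x y : V) (hxy : LinearIndependent ℂ ![x, y])
    (u v : E) (huv : LinearIndependent ℂ ![u, v]) (c : ℂ) :
    (2 : ℂ) • (x ⊗ₜ[ℂ] u) + c • (y ⊗ₜ[ℂ] v) ≠ 0 := by
  obtain ⟨φ, hφx, hφy⟩ := exists_dual_pair_aux x y hxy
  obtain ⟨ψ, hψu, hψv⟩ := exists_dual_pair_aux u v huv
  intro hcon
  have := congrArg (TensorProduct.lift ((LinearMap.mul ℂ ℂ).compl₁₂ φ ψ)) hcon
  simp [hφx, hφy, hψu, hψv] at this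

set_option maxHeartbeats 1000000 in
lemma casimir_eigvec_aux {L : Type*} [LieRing L] [LieAlgebra ℂ L]
    {V₁ : Type*} [AddCommGroup V₁] [Module ℂ V₁] [LieRingModule L V₁] [LieModule ℂ L V₁]
    {E : Type*} [AddCommGroup E] [Module ℂ E] [LieRingModule L E] [LieModule ℂ L E]
    (e h f : L) (δ lam : ℂ) (x y : V₁)
    (hhx : ⁅h, x⁆ = x) (hhy : ⁅h, y⁆ = (-1 : ℂ) • y)
    (hex : ⁅e, x⁆ = 0) (hfx : ⁅f, x⁆ = y) (hey : ⁅e, y⁆ = x) (hfy : ⁅f, y⁆ = 0)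
    (w : ℤ → E)
    (hwh : ∀ k : ℤ, ⁅h, w k⁆ = (lam + 2 * k) • w k)
    (hwf : ∀ k : ℤ, ⁅f, w k⁆ = w (k - 1))
    (hwe : ∀ k : ℤ, ⁅e, w k⁆
      = ((1 / 2 : ℂ) * (δ - (1 / 2 : ℂ) * (lam + 2 * k + 2) * (lam + 2 * k))) • w (k + 1))
    (k : ℤ) (ε : ℂ) (hchar : ε ^ 2 - (2 * δ + 1) * ε + (δ ^ 2 - δ - 3/4) = 0)
    (t : TensorProduct ℂ V₁ E)
    (ht : t = (2 : ℂ) • (x ⊗ₜ[ℂ] w k) + (ε - (δ + (lam + 2 * k) + 3/2)) • (y ⊗ₜ[ℂ] w (k + 1))) :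
      ⁅e, ⁅f, t⁆⁆ + (1 / 2 : ℂ) • ⁅h, ⁅h, t⁆⁆ + ⁅f, ⁅e, t⁆⁆ = ε • t := by
  subst ht
  simp only [lie_add, lie_smul, TensorProduct.LieModule.lie_tmul_right, hwh, hwf, hwe,
    hhx, hhy, hex, hey, hfx, hfy, add_sub_cancel_right, sub_add_cancel,
    TensorProduct.tmul_add, TensorProduct.add_tmul, TensorProduct.tmul_smul,
    TensorProduct.smul_tmul', smul_add, smul_smul, TensorProduct.zero_tmul,
    TensorProduct.tmul_zero, smul_zero, zero_add, add_zero, lie_zero, zero_smul]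
  simp only [← TensorProduct.smul_tmul']
  push_cast
  match_scalars
  · ring
  · linear_combination -hchar

/-- **Example 5.6.** Let `δ ∈ ℂ`.  For `𝔰𝔩₂` (elements `e`, `h`, `f` with the
standard relations), let `L₁` be the 2-dimensional irreducible module (basis `x`, `y`) and let
`E = E_{λ̄,δ}` be a weight module with one-dimensional weight spaces `ℂ · w k` of weights
`λ + 2k` (`k ∈ ℤ`), on which the Casimir acts by `δ`.  Then on each (2-dimensional) weight
space of `L₁ ⊗ E`, spanned by `x ⊗ w k` and `y ⊗ w (k+1)`, the Casimir operator
`ef + ½h² + fe` has eigenvalues `δ± = ½(2δ+1) ± √(2δ+1)`.  In particular, for `δ = -3/8` the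
eigenvalues are `-3/8` and `5/8`. -/
theorem sl2_casimir_eigenvalues_on_L1_tensor_relaxed
    {L : Type*} [LieRing L] [LieAlgebra ℂ L]
    (e h f : L)
    (hhe : ⁅h, e⁆ = (2 : ℂ) • e) (hhf : ⁅h, f⁆ = (-2 : ℂ) • f) (hef : ⁅e, f⁆ = h)
    (δ lam : ℂ)
    {V₁ : Type*} [AddCommGroup V₁] [Module ℂ V₁] [LieRingModule L V₁] [LieModule ℂ L V₁]
    (x y : V₁) (hxy : LinearIndependent ℂ ![x, y])
    (hhx : ⁅h, x⁆ = x) (hhy : ⁅h, y⁆ = (-1 : ℂ) • y)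
    (hex : ⁅e, x⁆ = 0) (hfx : ⁅f, x⁆ = y) (hey : ⁅e, y⁆ = x) (hfy : ⁅f, y⁆ = 0)
    {E : Type*} [AddCommGroup E] [Module ℂ E] [LieRingModule L E] [LieModule ℂ L E]
    (w : ℤ → E) (hw : LinearIndependent ℂ w)
    (hwh : ∀ k : ℤ, ⁅h, w k⁆ = (lam + 2 * k) • w k)
    (hwf : ∀ k : ℤ, ⁅f, w k⁆ = w (k - 1))
    (hwe : ∀ k : ℤ, ⁅e, w k⁆
      = ((1 / 2 : ℂ) * (δ - (1 / 2 : ℂ) * (lam + 2 * k + 2) * (lam + 2 * k))) • w (k + 1)) :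
    (∀ s : ℂ, s ^ 2 = 2 * δ + 1 → ∀ k : ℤ,
      ∀ ε ∈ ({(1 / 2 : ℂ) * (2 * δ + 1) + s, (1 / 2 : ℂ) * (2 * δ + 1) - s} : Set ℂ),
        ∃ t : TensorProduct ℂ V₁ E, t ≠ 0
          ∧ t ∈ Submodule.span ℂ ({x ⊗ₜ[ℂ] w k, y ⊗ₜ[ℂ] w (k + 1)} : Set (TensorProduct ℂ V₁ E))
          ∧ ⁅e, ⁅f, t⁆⁆ + (1 / 2 : ℂ) • ⁅h, ⁅h, t⁆⁆ + ⁅f, ⁅e, t⁆⁆ = ε • t)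
    ∧ (δ = -3/8 → ∀ s : ℂ, s ^ 2 = 2 * δ + 1 →
        ({(1 / 2 : ℂ) * (2 * δ + 1) + s, (1 / 2 : ℂ) * (2 * δ + 1) - s} : Set ℂ)
          = {-3/8, 5/8}) := by
  constructor
  · intro s hs k ε hε
    have hchar : ε ^ 2 - (2 * δ + 1) * ε + (δ ^ 2 - δ - 3/4) = 0 := by
      simp only [Set.mem_insert_iff, Set.mem_singleton_iff] at hε
      rcases hε with rfl | rfl
      · linear_combination hs
      · linear_combination hs
    refine ⟨(2 : ℂ) • (x ⊗ₜ[ℂ] w k)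
        + (ε - (δ + (lam + 2 * k) + 3/2)) • (y ⊗ₜ[ℂ] w (k + 1)), ?_, ?_, ?_⟩
    · have hwk : LinearIndependent ℂ ![w k, w (k + 1)] := by
        have hg : Function.Injective (![k, k + 1] : Fin 2 → ℤ) := by
          intro i j
          fin_cases i <;> fin_cases j <;> simp <;> omega
        have := hw.comp _ hg
        have he : w ∘ (![k, k + 1] : Fin 2 → ℤ) = ![w k, w (k + 1)] := by
          funext i; fin_cases i <;> rfl
        rwa [he] at this
      exact two_smul_add_smul_ne_zero_aux x y hxy (w k) (w (k + 1)) hwk _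
    · exact Submodule.add_mem _
        (Submodule.smul_mem _ _ (Submodule.subset_span (by simp)))
        (Submodule.smul_mem _ _ (Submodule.subset_span (by simp)))
    · exact casimir_eigvec_aux e h f δ lam x y hhx hhy hex hfx hey hfy w hwh hwf hwe
        k ε hchar _ rfl
  · rintro rfl s hs
    have h2 : (s - 1/2) * (s + 1/2) = 0 := by linear_combination hs
    have h58 : (1 / 2 : ℂ) * (2 * (-3/8) + 1) + (1/2 : ℂ) = 5/8 := by norm_num
    have hm38 : (1 / 2 : ℂ) * (2 * (-3/8) + 1) - (1/2 : ℂ) = -3/8 := by norm_num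
    rcases mul_eq_zero.mp h2 with h | h
    · have hs' : s = 1/2 := by linear_combination h
      subst hs'
      rw [h58, hm38]
      exact Set.pair_comm _ _
    · have hs' : s = -(1/2) := by linear_combination h
      subst hs'
      have e1 : (1 / 2 : ℂ) * (2 * (-3/8) + 1) + -(1/2 : ℂ) = -3/8 := by norm_num
      have e2 : (1 / 2 : ℂ) * (2 * (-3/8) + 1) - -(1/2 : ℂ) = 5/8 := by norm_num
      rw [e1, e2]
end

section
/- Let p ∈ ℕ and λ ∈ ℂ with λ ∉ ℕ and p+λ ∉ ℕ, and let L_λ be the Verma (= irreducible highest-weight) 𝔰𝔩₂-module with highest weight λ. Then the eigenvalues of the Casimir operator ef + ½h² + fe on L_p ⊗ L_λ are exactly ½(p+λ−2k)(p+λ−2k+2) for 0 ≤ k ≤ p, and the Casimir acts diagonalizably, corresponding to the decomposition L_p ⊗ L_λ ≅ ⨁_{k=0}^{p} L_{p+λ−2k}. -/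
namespace Sl2CasimirAux

variable {M : Type*} [AddCommGroup M] [Module ℂ M]

/-- The product `(Ω - c m • 1) ⋯ (Ω - c 0 • 1)`. -/
def P (Ω : Module.End ℂ M) (c : ℕ → ℂ) : ℕ → Module.End ℂ M
  | 0 => Ω - c 0 • 1
  | (m+1) => (Ω - c (m+1) • 1) * P Ω c m

variable (Ω : Module.End ℂ M) (c : ℕ → ℂ)

lemma P_comm (A : Module.End ℂ M) (hA : Ω * A = A * Ω) :
    ∀ m, P Ω c m * A = A * P Ω c m := by
  intro m
  have key : ∀ t : ℂ, (Ω - t • 1) * A = A * (Ω - t • 1) := by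
    intro t
    rw [sub_mul, mul_sub, hA, smul_mul_assoc, one_mul, mul_smul_comm, mul_one]
  induction m with
  | zero => exact key (c 0)
  | succ m ih =>
    calc (Ω - c (m+1) • 1) * P Ω c m * A
        = (Ω - c (m+1) • 1) * (A * P Ω c m) := by rw [mul_assoc, ih]
      _ = (Ω - c (m+1) • 1) * A * P Ω c m := by rw [mul_assoc]
      _ = A * (Ω - c (m+1) • 1) * P Ω c m := by rw [key]
      _ = A * ((Ω - c (m+1) • 1) * P Ω c m) := by rw [mul_assoc]

lemma P_eig (μ : ℂ) (x : M) (hx : Ω x = μ • x) :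
    ∀ m, P Ω c m x = (∏ k ∈ Finset.range (m+1), (μ - c k)) • x := by
  intro m
  induction m with
  | zero => simp [P, LinearMap.sub_apply, hx, sub_smul]
  | succ m ih =>
    rw [P, Module.End.mul_apply, ih, map_smul, LinearMap.sub_apply, hx,
      LinearMap.smul_apply, Module.End.one_apply, ← sub_smul, smul_smul]
    congr 1
    exact (Finset.prod_range_succ _ (m+1)).symm

lemma P_zero_of_eig (k : ℕ) (x : M) (hx : Ω x = c k • x) :
    ∀ m, k ≤ m → P Ω c m x = 0 := by
  intro m
  induction m with
  | zero =>
    intro hk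
    interval_cases k
    simp [P, LinearMap.sub_apply, hx]
  | succ m ih =>
    intro hk
    rcases Nat.lt_or_ge k (m+1) with h1 | h1
    · rw [P, Module.End.mul_apply, ih (Nat.lt_succ_iff.mp h1), map_zero]
    · have hk' : k = m + 1 := le_antisymm hk h1
      subst hk'
      have hcomm : P Ω c (m+1) = P Ω c m * (Ω - c (m+1) • 1) := by
        rw [P]
        exact (P_comm Ω c (Ω - c (m+1) • 1)
          (by rw [mul_sub, sub_mul, mul_smul_comm, smul_mul_assoc, one_mul, mul_one]) m).symm
      rw [hcomm, Module.End.mul_apply, LinearMap.sub_apply, hx]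
      simp

lemma P_split (m m' : ℕ) (h : m ≤ m') : ∃ Q, P Ω c m' = Q * P Ω c m := by
  induction m' with
  | zero =>
    interval_cases m
    exact ⟨1, (one_mul _).symm⟩
  | succ m' ih =>
    rcases Nat.lt_or_ge m (m'+1) with h1 | h1
    · obtain ⟨Q, hQ⟩ := ih (Nat.lt_succ_iff.mp h1)
      exact ⟨(Ω - c (m'+1) • 1) * Q, by rw [P, hQ, mul_assoc]⟩
    · have : m = m' + 1 := le_antisymm h h1
      subst this
      exact ⟨1, (one_mul _).symm⟩

lemma P_mem (W : Submodule ℂ M) (hW : ∀ x ∈ W, Ω x ∈ W) :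
    ∀ m, ∀ x ∈ W, P Ω c m x ∈ W := by
  intro m
  induction m with
  | zero =>
    intro x hx
    simpa [P, LinearMap.sub_apply] using W.sub_mem (hW x hx) (W.smul_mem (c 0) hx)
  | succ m ih =>
    intro x hx
    have h1 := ih x hx
    rw [P, Module.End.mul_apply]
    simpa [LinearMap.sub_apply] using
      W.sub_mem (hW _ h1) (W.smul_mem (c (m+1)) h1)

lemma mem_iSup_eigenspace (hc : ∀ i j : ℕ, c i = c j → i = j) :
    ∀ m (x : M), P Ω c m x = 0 → x ∈ ⨆ μ : ℂ, Module.End.eigenspace Ω μ := by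
  intro m
  induction m with
  | zero =>
    intro x hx
    have hΩx : Ω x = c 0 • x := by
      rw [P, LinearMap.sub_apply] at hx
      simpa [sub_eq_zero] using hx
    exact (le_iSup (fun μ : ℂ => Module.End.eigenspace Ω μ) (c 0))
      (Module.End.mem_eigenspace_iff.mpr hΩx)
  | succ m ih =>
    intro x hx
    set y := P Ω c m x with hy
    have hey : Ω y = c (m+1) • y := by
      have h0 : (Ω - c (m+1) • 1) y = 0 := by
        rw [hy, ← Module.End.mul_apply, ← P]; exact hx
      rw [LinearMap.sub_apply] at h0
      simpa [sub_eq_zero] using h0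
    set z : ℂ := ∏ k ∈ Finset.range (m+1), (c (m+1) - c k) with hz
    have hz0 : z ≠ 0 := by
      rw [hz]
      apply Finset.prod_ne_zero_iff.mpr
      intro k hk hzero
      have h1 : m + 1 = k := hc _ _ (sub_eq_zero.mp hzero)
      have h2 : k < m + 1 := Finset.mem_range.mp hk
      omega
    have h1 : P Ω c m (x - z⁻¹ • y) = 0 := by
      have h2 : P Ω c m y = z • y := by rw [P_eig Ω c _ y hey m, ← hz]
      rw [map_sub, map_smul, ← hy, h2, smul_smul, inv_mul_cancel₀ hz0, one_smul, sub_self]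
    have hx' := ih _ h1
    have hyy : y ∈ ⨆ μ : ℂ, Module.End.eigenspace Ω μ :=
      (le_iSup (fun μ : ℂ => Module.End.eigenspace Ω μ) (c (m+1)))
        (Module.End.mem_eigenspace_iff.mpr hey)
    have hxx : x = (x - z⁻¹ • y) + z⁻¹ • y := by abel
    rw [hxx]
    exact Submodule.add_mem _ hx' (Submodule.smul_mem _ _ hyy)

end Sl2CasimirAux

namespace Sl2CasimirAux

/-- Coefficients of the singular vectors. -/
noncomputable def casA (p : ℕ) (lam : ℂ) (k : ℕ) : ℕ → ℂ
  | 0 => 1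
  | (i+1) => casA p lam k i * (-(((k : ℂ) - i) * (lam - (k : ℂ) + i + 1))
      / (((i : ℂ) + 1) * ((p : ℂ) - i)))

end Sl2CasimirAux
set_option maxHeartbeats 1000000 in
/-- **Theorem 5.4 setup.** Let `p ∈ ℕ` and `λ ∈ ℂ` with `λ ∉ ℕ`, `p + λ ∉ ℕ`.
Let `V₁ = L_p` be the `(p+1)`-dimensional irreducible `𝔰𝔩₂`-module (with standard basis
`v 0, …, v p`) and `V₂ = L_λ` the (irreducible) Verma module of highest weight `λ` (with
standard basis `w 0, w 1, …`).  Then the Casimir operator `ef + ½h² + fe` on `L_p ⊗ L_λ` is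
diagonalizable and its eigenvalues are exactly `½(p+λ-2k)(p+λ-2k+2)` for `0 ≤ k ≤ p`,
corresponding to the decomposition `L_p ⊗ L_λ ≅ ⨁_{k=0}^p L_{p+λ-2k}`. -/
theorem sl2_casimir_on_Lp_tensor_verma
    {L : Type*} [LieRing L] [LieAlgebra ℂ L]
    (e h f : L)
    (hhe : ⁅h, e⁆ = (2 : ℂ) • e) (hhf : ⁅h, f⁆ = (-2 : ℂ) • f) (hef : ⁅e, f⁆ = h)
    (p : ℕ) (lam : ℂ)
    (hlam : ∀ m : ℕ, lam ≠ m) (hplam : ∀ m : ℕ, (p : ℂ) + lam ≠ m)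
    {V₁ : Type*} [AddCommGroup V₁] [Module ℂ V₁] [LieRingModule L V₁] [LieModule ℂ L V₁]
    (v : ℕ → V₁)
    (hspan₁ : Submodule.span ℂ (Set.range fun i : Fin (p + 1) => v i) = ⊤)
    (hind₁ : LinearIndependent ℂ fun i : Fin (p + 1) => v i)
    (hv_top : ∀ k : ℕ, p < k → v k = 0)
    (hvh : ∀ k : ℕ, ⁅h, v k⁆ = ((p : ℂ) - 2 * k) • v k)
    (hvf : ∀ k : ℕ, ⁅f, v k⁆ = v (k + 1))
    (hve0 : ⁅e, v 0⁆ = 0)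
    (hve : ∀ k : ℕ, ⁅e, v (k + 1)⁆ = (((k : ℂ) + 1) * ((p : ℂ) - k)) • v k)
    {V₂ : Type*} [AddCommGroup V₂] [Module ℂ V₂] [LieRingModule L V₂] [LieModule ℂ L V₂]
    (w : ℕ → V₂)
    (hspan₂ : Submodule.span ℂ (Set.range w) = ⊤)
    (hind₂ : LinearIndependent ℂ w)
    (hwh : ∀ k : ℕ, ⁅h, w k⁆ = (lam - 2 * k) • w k)
    (hwf : ∀ k : ℕ, ⁅f, w k⁆ = w (k + 1))
    (hwe0 : ⁅e, w 0⁆ = 0)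
    (hwe : ∀ k : ℕ, ⁅e, w (k + 1)⁆ = (((k : ℂ) + 1) * (lam - k)) • w k)
    (Ω : Module.End ℂ (TensorProduct ℂ V₁ V₂))
    (hΩ : Ω = LieModule.toEnd ℂ L (TensorProduct ℂ V₁ V₂) e
              * LieModule.toEnd ℂ L (TensorProduct ℂ V₁ V₂) f
            + (1 / 2 : ℂ) • (LieModule.toEnd ℂ L (TensorProduct ℂ V₁ V₂) h
              * LieModule.toEnd ℂ L (TensorProduct ℂ V₁ V₂) h)
            + LieModule.toEnd ℂ L (TensorProduct ℂ V₁ V₂) f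
              * LieModule.toEnd ℂ L (TensorProduct ℂ V₁ V₂) e) :
    (∀ μ : ℂ, Module.End.HasEigenvalue Ω μ ↔
        ∃ k : ℕ, k ≤ p ∧ μ = (1 / 2 : ℂ) * ((p : ℂ) + lam - 2 * k) * ((p : ℂ) + lam - 2 * k + 2))
      ∧ (⨆ μ : ℂ, Module.End.eigenspace Ω μ) = ⊤ := by
  classical
  -- the pure tensors
  set T : ℕ → ℕ → TensorProduct ℂ V₁ V₂ := fun i j => v i ⊗ₜ[ℂ] w j with hTdef
  -- single-variable action formulas with truncated subtraction
  have hve' : ∀ i : ℕ, ⁅e, v i⁆ = ((i : ℂ) * ((p : ℂ) - i + 1)) • v (i - 1) := by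
    intro i
    cases i with
    | zero => simpa using hve0
    | succ k =>
      rw [hve k, Nat.add_sub_cancel]
      congr 1
      push_cast
      ring
  have hwe' : ∀ j : ℕ, ⁅e, w j⁆ = ((j : ℂ) * (lam - j + 1)) • w (j - 1) := by
    intro j
    cases j with
    | zero => simpa using hwe0
    | succ k =>
      rw [hwe k, Nat.add_sub_cancel]
      congr 1
      push_cast
      ring
  -- action on pure tensors
  have hTe : ∀ i j : ℕ, ⁅e, T i j⁆
      = ((i : ℂ) * ((p : ℂ) - i + 1)) • T (i - 1) j
        + ((j : ℂ) * (lam - j + 1)) • T i (j - 1) := by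
    intro i j
    show ⁅e, v i ⊗ₜ[ℂ] w j⁆ = _
    rw [TensorProduct.LieModule.lie_tmul_right, hve', hwe', ← TensorProduct.smul_tmul',
      TensorProduct.tmul_smul]
  have hTf : ∀ i j : ℕ, ⁅f, T i j⁆ = T (i + 1) j + T i (j + 1) := by
    intro i j
    show ⁅f, v i ⊗ₜ[ℂ] w j⁆ = _
    rw [TensorProduct.LieModule.lie_tmul_right, hvf, hwf]
  have hTh : ∀ i j : ℕ, ⁅h, T i j⁆ = ((p : ℂ) + lam - 2 * i - 2 * j) • T i j := by
    intro i j
    show ⁅h, v i ⊗ₜ[ℂ] w j⁆ = _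
    rw [TensorProduct.LieModule.lie_tmul_right, hvh, hwh, ← TensorProduct.smul_tmul',
      TensorProduct.tmul_smul, ← add_smul]
    congr 1
    ring
  -- Ω applied pointwise
  have hΩap : ∀ x : TensorProduct ℂ V₁ V₂,
      Ω x = ⁅e, ⁅f, x⁆⁆ + (1 / 2 : ℂ) • ⁅h, ⁅h, x⁆⁆ + ⁅f, ⁅e, x⁆⁆ := by
    intro x
    rw [hΩ]
    simp [LieModule.toEnd_apply_apply]
  -- the diagonal coefficient
  set D : ℕ → ℕ → ℂ := fun i j =>
    (1/2) * ((p : ℂ) + lam - 2*i - 2*j)^2 + ((i : ℂ) + 1) * ((p : ℂ) - i)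
    + ((j : ℂ) + 1) * (lam - j) + (i : ℂ) * ((p : ℂ) - i + 1)
    + (j : ℂ) * (lam - j + 1) with hDdef
  have hfix1 : ∀ (i j : ℕ) (t : TensorProduct ℂ V₁ V₂),
      ((i : ℂ) * ((p : ℂ) - i + 1)) • T (i - 1 + 1) j = ((i : ℂ) * ((p : ℂ) - i + 1)) • T i j := by
    intro i j _
    cases i with
    | zero => simp
    | succ k => rfl
  have hfix2 : ∀ (i j : ℕ),
      ((j : ℂ) * (lam - j + 1)) • T i (j - 1 + 1) = ((j : ℂ) * (lam - j + 1)) • T i j := by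
    intro i j
    cases j with
    | zero => simp
    | succ k => rfl
  have hΩT : ∀ i j : ℕ, Ω (T i j)
      = D i j • T i j + (2 * (i : ℂ) * ((p : ℂ) - i + 1)) • T (i - 1) (j + 1)
        + (2 * (j : ℂ) * (lam - j + 1)) • T (i + 1) (j - 1) := by
    intro i j
    rw [hΩap, hTf i j, lie_add, hTe (i+1) j, hTe i (j+1), hTh i j, lie_smul, hTh i j,
      hTe i j]
    simp only [lie_add, lie_smul, hTf, smul_add]
    rw [hfix1 i j 0, hfix2 i j]
    simp only [Nat.add_sub_cancel]
    rw [hDdef]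
    match_scalars <;> push_cast <;> ring
  -- bases
  let B₁ : Module.Basis (Fin (p+1)) ℂ V₁ := Module.Basis.mk hind₁ hspan₁.ge
  let B₂ : Module.Basis ℕ ℂ V₂ := Module.Basis.mk hind₂ hspan₂.ge
  let B : Module.Basis (Fin (p+1) × ℕ) ℂ (TensorProduct ℂ V₁ V₂) := Module.Basis.tensorProduct B₁ B₂
  have hB : ∀ (i : Fin (p+1)) (j : ℕ), B (i, j) = T (i : ℕ) j := by
    intro i j
    simp [B, B₁, B₂, Module.Basis.tensorProduct_apply, Module.Basis.mk_apply, hTdef]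
  -- coefficient extraction
  have hzero : ∀ (n m : ℕ), m ≤ p + 1 → ∀ b : ℕ → ℂ,
      (∑ i ∈ Finset.range m, b i • T i (n - i)) = 0 → ∀ i, i < m → b i = 0 := by
    intro n m hmp b hsum i him
    have hinj : Function.Injective
        (fun i : Fin m => ((⟨(i : ℕ), lt_of_lt_of_le i.2 hmp⟩ : Fin (p+1)), n - (i : ℕ))) := by
      intro x y hxy
      have h1 := congrArg Prod.fst hxy
      exact Fin.ext (by simpa using congrArg Fin.val h1)
    have hli := B.linearIndependent.comp _ hinj
    have hsum' : ∑ i : Fin m,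
        b i • (B ∘ (fun i : Fin m =>
          ((⟨(i : ℕ), lt_of_lt_of_le i.2 hmp⟩ : Fin (p+1)), n - (i : ℕ)))) i = 0 := by
      have hstep : ∑ i : Fin m,
          b i • (B ∘ (fun i : Fin m =>
            ((⟨(i : ℕ), lt_of_lt_of_le i.2 hmp⟩ : Fin (p+1)), n - (i : ℕ)))) i
          = ∑ i : Fin m, b i • T (i : ℕ) (n - (i : ℕ)) :=
        Finset.sum_congr rfl fun i _ => by rw [Function.comp_apply, hB]
      rw [hstep, Fin.sum_univ_eq_sum_range (fun i => b i • T i (n - i)) m]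
      exact hsum
    exact Fintype.linearIndependent_iff.mp hli (fun i => b i) hsum' ⟨i, him⟩
  -- singular vector coefficients
  set a : ℕ → ℕ → ℂ := Sl2CasimirAux.casA p lam with hadef
  have ha0 : ∀ k, a k 0 = 1 := fun k => rfl
  have ha_succ : ∀ k i, a k (i+1) = a k i * (-(((k : ℂ) - i) * (lam - (k : ℂ) + i + 1))
      / (((i : ℂ) + 1) * ((p : ℂ) - i))) := fun k i => rfl
  have hden : ∀ i : ℕ, i < p → (((i : ℂ) + 1) * ((p : ℂ) - i)) ≠ 0 := by
    intro i hip
    apply mul_ne_zero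
    · exact_mod_cast Nat.succ_ne_zero i
    · have : (i : ℂ) ≠ (p : ℂ) := by exact_mod_cast Nat.ne_of_lt hip
      exact sub_ne_zero.mpr (Ne.symm this)
  have ha_rec : ∀ k i : ℕ, i < p →
      a k (i+1) * (((i : ℂ) + 1) * ((p : ℂ) - i))
        + a k i * (((k : ℂ) - i) * (lam - (k : ℂ) + i + 1)) = 0 := by
    intro k i hip
    have h1 : ((i : ℂ) + 1) ≠ 0 := by exact_mod_cast Nat.succ_ne_zero i
    have h2 : ((p : ℂ) - i) ≠ 0 := by
      have : (i : ℂ) ≠ (p : ℂ) := by exact_mod_cast Nat.ne_of_lt hip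
      exact sub_ne_zero.mpr (Ne.symm this)
    rw [ha_succ]
    field_simp
    ring
  have ha_top : ∀ k, a k (k+1) = 0 := by
    intro k
    rw [ha_succ]
    simp
  -- bracketing with e spreads a full-weight sum
  have lie_sum' : ∀ (x : L) (s : Finset ℕ) (g : ℕ → TensorProduct ℂ V₁ V₂),
      ⁅x, ∑ i ∈ s, g i⁆ = ∑ i ∈ s, ⁅x, g i⁆ := by
    intro x s g
    induction s using Finset.cons_induction with
    | empty => simp
    | cons c s hc ih => rw [Finset.sum_cons, Finset.sum_cons, lie_add, ih]
  have hE_full : ∀ (N m : ℕ) (b : ℕ → ℂ), m ≤ N → b (m+1) = 0 →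
      ⁅e, ∑ i ∈ Finset.range (m+1), b i • T i (N - i)⁆
        = ∑ i ∈ Finset.range (m+1),
            (b (i+1) * (((i : ℂ)+1) * ((p : ℂ)-i))
              + b i * (((N : ℂ)-i) * (lam - (N : ℂ) + i + 1))) • T i (N - 1 - i) := by
    intro N m b hmN hb
    rw [lie_sum']
    have hterm : ∀ i ∈ Finset.range (m+1),
        ⁅e, b i • T i (N - i)⁆
          = (b i * ((i : ℂ) * ((p : ℂ) - i + 1))) • T (i-1) (N - i)
            + (b i * (((N : ℂ)-i) * (lam - (N : ℂ) + i + 1))) • T i (N - 1 - i) := by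
      intro i hi
      have hiN : i ≤ N := le_trans (Nat.lt_succ_iff.mp (Finset.mem_range.mp hi)) hmN
      have hidx : N - i - 1 = N - 1 - i := by omega
      have hcast : ((N - i : ℕ) : ℂ) = (N : ℂ) - i := Nat.cast_sub hiN
      rw [lie_smul, hTe i (N - i), hidx, hcast, smul_add, smul_smul, smul_smul]
      congr 2
      ring
    rw [Finset.sum_congr rfl hterm, Finset.sum_add_distrib]
    have h1 : ∑ i ∈ Finset.range (m+1), (b i * ((i : ℂ) * ((p : ℂ) - i + 1))) • T (i-1) (N - i)
        = ∑ i ∈ Finset.range (m+1),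
            (b (i+1) * (((i : ℂ)+1) * ((p : ℂ)-i))) • T i (N - 1 - i) := by
      rw [Finset.sum_range_succ'
        (fun i => (b i * ((i : ℂ) * ((p : ℂ) - i + 1))) • T (i-1) (N - i)) m]
      rw [Finset.sum_range_succ
        (fun i => (b (i+1) * (((i : ℂ)+1) * ((p : ℂ)-i))) • T i (N - 1 - i)) m]
      have htop : (b (m+1) * (((m : ℂ)+1) * ((p : ℂ)-m))) • T m (N-1-m) = 0 := by
        rw [hb]; simp
      have hbot : (b 0 * ((0 : ℕ) : ℂ) * (((p : ℂ) - (0:ℕ) + 1))) • T (0-1) (N - 0) = 0 := by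
        simp
      rw [htop]
      simp only [Nat.cast_zero, zero_mul, mul_zero, zero_smul, add_zero]
      apply Finset.sum_congr rfl
      intro i hi
      have hidx2 : N - (i+1) = N - 1 - i := by omega
      rw [hidx2, Nat.add_sub_cancel]
      congr 1
      push_cast
      ring
    rw [h1, ← Finset.sum_add_distrib]
    exact Finset.sum_congr rfl fun i _ => by rw [← add_smul]
  -- the singular vectors
  set s : ℕ → TensorProduct ℂ V₁ V₂ :=
    fun k => ∑ i ∈ Finset.range (k+1), a k i • T i (k - i) with hsdef
  have hs_e : ∀ k, k ≤ p → ⁅e, s k⁆ = 0 := by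
    intro k hkp
    simp only [hsdef]
    rw [hE_full k k (a k) le_rfl (ha_top k)]
    apply Finset.sum_eq_zero
    intro i hi
    rcases Nat.lt_or_ge i k with hik' | hik'
    · rw [ha_rec k i (lt_of_lt_of_le hik' hkp), zero_smul]
    · have hik : i = k := le_antisymm (Nat.lt_succ_iff.mp (Finset.mem_range.mp hi)) hik'
      subst hik
      rw [ha_top]
      simp
  have hs_h : ∀ k : ℕ, ⁅h, s k⁆ = ((p : ℂ) + lam - 2*k) • s k := by
    intro k
    simp only [hsdef]
    rw [lie_sum', Finset.smul_sum]
    apply Finset.sum_congr rfl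
    intro i hi
    have hik : i ≤ k := Nat.lt_succ_iff.mp (Finset.mem_range.mp hi)
    rw [lie_smul, hTh, smul_smul, smul_smul]
    congr 1
    rw [Nat.cast_sub hik]
    ring
  have hs_ne : ∀ k, k ≤ p → s k ≠ 0 := by
    intro k hkp hz
    simp only [hsdef] at hz
    have h0 := hzero k (k+1) (by omega) (a k) hz 0 (by omega)
    rw [ha0] at h0
    exact one_ne_zero h0
  -- Casimir eigenvalues
  set c : ℕ → ℂ :=
    fun k => (1/2 : ℂ) * ((p : ℂ) + lam - 2*k) * ((p : ℂ) + lam - 2*k + 2) with hcdef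
  have hΩs : ∀ k, k ≤ p → Ω (s k) = c k • s k := by
    intro k hkp
    rw [hΩap (s k), hs_e k hkp, lie_zero, leibniz_lie e f (s k), hef, hs_e k hkp, lie_zero, hs_h, lie_smul, hs_h]
    simp only [hcdef]
    match_scalars
    ring
  -- weight spaces
  set W : ℕ → Submodule ℂ (TensorProduct ℂ V₁ V₂) :=
    fun n => Submodule.span ℂ (Set.range (fun i : Fin (min n p + 1) => T i (n - i))) with hWdef
  have hW_genmem : ∀ n i : ℕ, i ≤ min n p → T i (n - i) ∈ W n := by
    intro n i hi
    exact Submodule.subset_span ⟨⟨i, by omega⟩, rfl⟩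
  have hT_mem : ∀ i j : ℕ, T i j ∈ W (i + j) := by
    intro i j
    rcases le_or_gt i p with hip | hip
    · have h1 : i ≤ min (i+j) p := by omega
      have h2 := hW_genmem (i+j) i h1
      rwa [Nat.add_sub_cancel_left] at h2
    · have hv0 : v i = 0 := hv_top i hip
      have : T i j = 0 := by simp only [hTdef]; rw [hv0, TensorProduct.zero_tmul]
      rw [this]; exact Submodule.zero_mem _
  have hW_rep : ∀ n x, x ∈ W n → ∃ b : ℕ → ℂ,
      (x = ∑ i ∈ Finset.range (min n p + 1), b i • T i (n - i))
        ∧ ∀ i, min n p + 1 ≤ i → b i = 0 := by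
    intro n x hx
    rw [hWdef] at hx
    obtain ⟨cf, hcf⟩ := (Submodule.mem_span_range_iff_exists_fun ℂ).mp hx
    refine ⟨fun i => if hi : i < min n p + 1 then cf ⟨i, hi⟩ else 0, ?_, ?_⟩
    · rw [← hcf, ← Fin.sum_univ_eq_sum_range
        (fun i => (if hi : i < min n p + 1 then cf ⟨i, hi⟩ else 0) • T i (n - i))]
      apply Finset.sum_congr rfl
      intro i _
      rw [dif_pos i.2]
    · intro i hi
      exact dif_neg (by omega)
  -- W n is Ω-invariant
  have hΩW : ∀ n, ∀ x ∈ W n, Ω x ∈ W n := by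
    intro n x hx
    obtain ⟨b, hxb, -⟩ := hW_rep n x hx
    rw [hxb, map_sum]
    apply Submodule.sum_mem
    intro i hi
    have him : i ≤ min n p := Nat.lt_succ_iff.mp (Finset.mem_range.mp hi)
    rw [map_smul]
    apply Submodule.smul_mem
    rw [hΩT i (n - i)]
    have hm1 : (D i (n-i)) • T i (n - i) ∈ W n := Submodule.smul_mem _ _ (hW_genmem n i him)
    have hm2 : (2 * (i : ℂ) * ((p : ℂ) - i + 1)) • T (i - 1) (n - i + 1) ∈ W n := by
      rcases Nat.eq_zero_or_pos i with h0 | h0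
      · subst h0; simp
      · apply Submodule.smul_mem
        have : n - i + 1 = n - (i - 1) := by omega
        rw [this]
        exact hW_genmem n (i-1) (by omega)
    have hm3 : (2 * ((n - i : ℕ) : ℂ) * (lam - ((n - i : ℕ) : ℂ) + 1)) • T (i + 1) (n - i - 1)
        ∈ W n := by
      rcases Nat.lt_or_ge i (min n p) with hlt | hge
      · apply Submodule.smul_mem
        have : n - i - 1 = n - (i + 1) := by omega
        rw [this]
        exact hW_genmem n (i+1) (by omega)
      · have hieq : i = min n p := le_antisymm him hge
        rcases Nat.le_total n p with hnp | hpn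
        · -- min = n, so n - i = 0
          have : n - i = 0 := by omega
          rw [this]
          simp
        · -- min = p, i = p, T (p+1) _ = 0
          have hip : i = p := by omega
          have : T (i+1) (n - i - 1) = 0 := by
            simp only [hTdef]
            rw [hv_top (i+1) (by omega), TensorProduct.zero_tmul]
          rw [this]
          simp
    exact Submodule.add_mem _ (Submodule.add_mem _ hm1 hm2) hm3
  -- e lowers the weight
  have hEW : ∀ n, ∀ x ∈ W (n+1), ⁅e, x⁆ ∈ W n := by
    intro n x hx
    obtain ⟨b, hxb, -⟩ := hW_rep (n+1) x hx
    rw [hxb, lie_sum']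
    apply Submodule.sum_mem
    intro i hi
    have him : i ≤ min (n+1) p := Nat.lt_succ_iff.mp (Finset.mem_range.mp hi)
    rw [lie_smul]
    apply Submodule.smul_mem
    rw [hTe i (n+1-i)]
    have hm1 : ((i : ℂ) * ((p : ℂ) - i + 1)) • T (i-1) (n+1-i) ∈ W n := by
      rcases Nat.eq_zero_or_pos i with h0 | h0
      · subst h0; simp
      · apply Submodule.smul_mem
        have : n + 1 - i = n - (i - 1) := by omega
        rw [this]
        exact hW_genmem n (i-1) (by omega)
    have hm2 : (((n+1-i : ℕ) : ℂ) * (lam - ((n+1-i : ℕ) : ℂ) + 1)) • T i (n+1-i-1) ∈ W n := by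
      rcases Nat.lt_or_ge i (n+1) with hlt | hge
      · apply Submodule.smul_mem
        have : n + 1 - i - 1 = n - i := by omega
        rw [this]
        exact hW_genmem n i (by omega)
      · have : n + 1 - i = 0 := by omega
        rw [this]
        simp
    exact Submodule.add_mem _ hm1 hm2
  -- s k lies in W k
  have hs_mem : ∀ k, k ≤ p → s k ∈ W k := by
    intro k hkp
    simp only [hsdef]
    apply Submodule.sum_mem
    intro i hi
    exact Submodule.smul_mem _ _ (hW_genmem k i (by
      have := Finset.mem_range.mp hi; omega))
  -- kernel of e on W (n+1), case n+1 ≤ p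
  have hker₁ : ∀ n : ℕ, n + 1 ≤ p → ∀ x ∈ W (n+1), ⁅e, x⁆ = 0 → ∃ t : ℂ, x = t • s (n+1) := by
    intro n hnp x hx hex
    obtain ⟨b, hxb, hb0⟩ := hW_rep (n+1) x hx
    have hmin : min (n+1) p = n + 1 := by omega
    rw [hmin] at hxb hb0
    rw [hxb, hE_full (n+1) (n+1) b le_rfl (hb0 (n+2) le_rfl), Finset.sum_range_succ] at hex
    have htop : (b (n+1+1) * ((((n+1 : ℕ) : ℂ)+1) * ((p : ℂ)-((n+1 : ℕ) : ℂ)))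
        + b (n+1) * ((((n+1 : ℕ) : ℂ)-((n+1 : ℕ) : ℂ)) * (lam - ((n+1 : ℕ) : ℂ) + (n+1 : ℕ) + 1)))
          • T (n+1) (n+1-1-(n+1)) = 0 := by
      rw [hb0 (n+2) le_rfl]
      simp
    rw [htop, add_zero] at hex
    simp only [Nat.add_sub_cancel] at hex
    have hco := hzero n (n+1) (by omega) _ hex
    have hba : ∀ i, i ≤ n + 1 → b i = b 0 * a (n+1) i := by
      intro i
      induction i with
      | zero => intro _; rw [ha0, mul_one]
      | succ i ih =>
        intro hi1
        have hrec_b := hco i (by omega)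
        have hrec_a := ha_rec (n+1) i (by omega)
        have hY := hden i (by omega)
        have hbi := ih (by omega)
        apply mul_right_cancel₀ hY
        calc b (i+1) * (((i : ℂ) + 1) * ((p : ℂ) - i))
            = -(b i * ((((n+1 : ℕ) : ℂ) - i) * (lam - ((n+1 : ℕ) : ℂ) + i + 1))) := by
              linear_combination hrec_b
          _ = -(b 0 * a (n+1) i * ((((n+1 : ℕ) : ℂ) - i) * (lam - ((n+1 : ℕ) : ℂ) + i + 1))) := by
              rw [hbi]
          _ = (b 0 * a (n+1) (i+1)) * (((i : ℂ) + 1) * ((p : ℂ) - i)) := by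
              have hrec_a' : a (n+1) (i+1) * (((i : ℂ) + 1) * ((p : ℂ) - i))
                  + a (n+1) i * ((((n+1 : ℕ) : ℂ) - i) * (lam - ((n+1 : ℕ) : ℂ) + i + 1)) = 0 :=
                hrec_a
              linear_combination (-(b 0)) * hrec_a'
    refine ⟨b 0, ?_⟩
    rw [hxb]
    simp only [hsdef]
    rw [Finset.smul_sum]
    apply Finset.sum_congr rfl
    intro i hi
    rw [hba i (by have := Finset.mem_range.mp hi; omega), smul_smul]
  -- kernel of e on W (n+1), case p ≤ n : injective
  have hker₂ : ∀ n : ℕ, p ≤ n → ∀ x ∈ W (n+1), ⁅e, x⁆ = 0 → x = 0 := by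
    intro n hpn x hx hex
    obtain ⟨b, hxb, hb0⟩ := hW_rep (n+1) x hx
    have hmin : min (n+1) p = p := by omega
    rw [hmin] at hxb hb0
    rw [hxb, hE_full (n+1) p b (by omega) (hb0 (p+1) le_rfl)] at hex
    simp only [Nat.add_sub_cancel] at hex
    have hco := hzero n (p+1) (by omega) _ hex
    have hfac : ∀ i : ℕ, i ≤ p → ((((n+1 : ℕ) : ℂ) - i) * (lam - ((n+1 : ℕ) : ℂ) + i + 1)) ≠ 0 := by
      intro i hip
      apply mul_ne_zero
      · have : (i : ℂ) ≠ ((n+1 : ℕ) : ℂ) := by exact_mod_cast (by omega : i ≠ n + 1)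
        exact sub_ne_zero.mpr (Ne.symm this)
      · have hcast : lam - ((n+1 : ℕ) : ℂ) + i + 1 = lam - ((n - i : ℕ) : ℂ) := by
          rw [Nat.cast_sub (by omega : i ≤ n)]
          push_cast
          ring
        rw [hcast, sub_ne_zero]
        exact hlam (n - i)
    have hdown : ∀ t, t ≤ p → b (p - t) = 0 := by
      intro t
      induction t with
      | zero =>
        intro _
        have h1 := hco p (by omega)
        rw [hb0 (p+1) le_rfl] at h1
        have h2 : b p * ((((n+1 : ℕ) : ℂ) - p) * (lam - ((n+1 : ℕ) : ℂ) + p + 1)) = 0 := by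
          linear_combination h1
        simpa [Nat.sub_zero] using
          (mul_eq_zero.mp h2).resolve_right (hfac p le_rfl)
      | succ t ih =>
        intro ht1
        have hbt := ih (by omega)
        have h1 := hco (p - (t+1)) (by omega)
        have hidx : p - (t+1) + 1 = p - t := by omega
        rw [hidx, hbt] at h1
        have h2 : b (p - (t+1))
            * ((((n+1 : ℕ) : ℂ) - (p - (t+1) : ℕ)) * (lam - ((n+1 : ℕ) : ℂ) + (p - (t+1) : ℕ) + 1))
              = 0 := by
          linear_combination h1
        exact (mul_eq_zero.mp h2).resolve_right (hfac (p - (t+1)) (by omega))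
    have hball : ∀ i, i < p + 1 → b i = 0 := by
      intro i hi
      have := hdown (p - i) (by omega)
      rwa [Nat.sub_sub_self (by omega : i ≤ p)] at this
    rw [hxb]
    apply Finset.sum_eq_zero
    intro i hi
    rw [hball i (Finset.mem_range.mp hi), zero_smul]
  -- commutation of the Casimir operator with the action of e (pointwise)
  have l1 : ∀ z : TensorProduct ℂ V₁ V₂, ⁅h, ⁅e, z⁆⁆ = ⁅e, ⁅h, z⁆⁆ + (2:ℂ) • ⁅e, z⁆ := by
    intro z
    rw [leibniz_lie h e z, hhe, smul_lie]
    abel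
  have l2 : ∀ z : TensorProduct ℂ V₁ V₂, ⁅f, ⁅e, z⁆⁆ = ⁅e, ⁅f, z⁆⁆ - ⁅h, z⁆ := by
    intro z
    have h1 := leibniz_lie e f z
    rw [hef] at h1
    rw [h1]
    abel
  have hcomm_e : ∀ y : TensorProduct ℂ V₁ V₂, Ω ⁅e, y⁆ = ⁅e, Ω y⁆ := by
    intro y
    rw [hΩap, hΩap]
    simp only [lie_add, lie_smul, l2, l1, lie_sub, smul_add, smul_sub]
    module
  have hEcommP : ∀ (m : ℕ) (y : TensorProduct ℂ V₁ V₂),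
      Sl2CasimirAux.P Ω c m ⁅e, y⁆ = ⁅e, Sl2CasimirAux.P Ω c m y⁆ := by
    intro m
    induction m with
    | zero =>
      intro y
      show (Ω - c 0 • 1) ⁅e, y⁆ = ⁅e, (Ω - c 0 • 1) y⁆
      simp only [LinearMap.sub_apply, LinearMap.smul_apply, Module.End.one_apply,
        lie_sub, lie_smul, hcomm_e y]
    | succ m ih =>
      intro y
      show (Ω - c (m+1) • 1) (Sl2CasimirAux.P Ω c m ⁅e, y⁆)
          = ⁅e, (Ω - c (m+1) • 1) (Sl2CasimirAux.P Ω c m y)⁆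
      rw [ih y]
      simp only [LinearMap.sub_apply, LinearMap.smul_apply, Module.End.one_apply,
        lie_sub, lie_smul, hcomm_e]
  -- the main induction on weights
  have hclaim : ∀ n, ∀ x ∈ W n, Sl2CasimirAux.P Ω c (min n p) x = 0 := by
    intro n
    induction n with
    | zero =>
      intro x hx
      obtain ⟨b, hxb, -⟩ := hW_rep 0 x hx
      have hm0 : min 0 p = 0 := by omega
      rw [hm0] at hxb ⊢
      rw [hxb, Finset.sum_range_one]
      have hs0 : T 0 (0 - 0) = s 0 := by
        simp only [hsdef]
        rw [Finset.sum_range_one, ha0, one_smul]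
      rw [hs0, map_smul,
        Sl2CasimirAux.P_zero_of_eig Ω c 0 (s 0) (hΩs 0 (by omega)) 0 le_rfl, smul_zero]
    | succ n ih =>
      intro x hx
      rcases Nat.lt_or_ge n p with hnp | hnp
      · have hminn : min n p = n := by omega
        have hm : min (n+1) p = n+1 := by omega
        have h1 : Sl2CasimirAux.P Ω c n ⁅e, x⁆ = 0 := by
          have := ih ⁅e, x⁆ (hEW n x hx)
          rwa [hminn] at this
        have h2 : ⁅e, Sl2CasimirAux.P Ω c n x⁆ = 0 := by rw [← hEcommP n x, h1]
        have h3 : Sl2CasimirAux.P Ω c n x ∈ W (n+1) :=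
          Sl2CasimirAux.P_mem Ω c _ (hΩW (n+1)) n x hx
        obtain ⟨t, ht⟩ := hker₁ n (by omega) (Sl2CasimirAux.P Ω c n x) h3 h2
        rw [hm]
        have hstep : Sl2CasimirAux.P Ω c (n+1) x
            = (Ω - c (n+1) • (1 : Module.End ℂ (TensorProduct ℂ V₁ V₂)))
              (Sl2CasimirAux.P Ω c n x) := rfl
        rw [hstep, ht, map_smul, LinearMap.sub_apply, hΩs (n+1) (by omega)]
        simp
      · have hminn : min n p = p := by omega
        have hm : min (n+1) p = p := by omega
        have h1 : Sl2CasimirAux.P Ω c p ⁅e, x⁆ = 0 := by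
          have := ih ⁅e, x⁆ (hEW n x hx)
          rwa [hminn] at this
        have h2 : ⁅e, Sl2CasimirAux.P Ω c p x⁆ = 0 := by rw [← hEcommP p x, h1]
        have h3 : Sl2CasimirAux.P Ω c p x ∈ W (n+1) :=
          Sl2CasimirAux.P_mem Ω c _ (hΩW (n+1)) p x hx
        rw [hm]
        exact hker₂ n hnp (Sl2CasimirAux.P Ω c p x) h3 h2
  -- P p annihilates everything
  have hPtop : ∀ x : TensorProduct ℂ V₁ V₂, Sl2CasimirAux.P Ω c p x = 0 := by
    intro x
    have hx : x ∈ Submodule.span ℂ (Set.range B) := by rw [B.span_eq]; trivial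
    refine Submodule.span_induction ?_ ?_ ?_ ?_ hx
    · rintro y ⟨⟨i, j⟩, rfl⟩
      rw [hB]
      have hmem := hT_mem (i : ℕ) j
      have h1 := hclaim ((i : ℕ) + j) _ hmem
      obtain ⟨Q, hQ⟩ := Sl2CasimirAux.P_split Ω c (min ((i : ℕ) + j) p) p (by omega)
      rw [hQ, Module.End.mul_apply, h1, map_zero]
    · exact map_zero _
    · intro y z _ _ hy hz
      rw [map_add, hy, hz, add_zero]
    · intro t y _ hy
      rw [map_smul, hy, smul_zero]
  -- the eigenvalues are pairwise distinct
  have hc_inj : ∀ i j : ℕ, c i = c j → i = j := by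
    intro i j hc
    by_contra hne
    have h1 : ((j : ℂ) - i) * (2*((p : ℂ) + lam) - 2*i - 2*j + 2) = 0 := by
      simp only [hcdef] at hc
      linear_combination hc
    rcases mul_eq_zero.mp h1 with h2 | h2
    · have : (j : ℂ) = i := by linear_combination h2
      exact hne (by exact_mod_cast this.symm)
    · have hij : 1 ≤ i + j := by omega
      apply hplam (i + j - 1)
      rw [Nat.cast_sub hij]
      push_cast
      linear_combination (1/2 : ℂ) * h2
  constructor
  · intro μ
    constructor
    · intro hμ
      obtain ⟨x, hx⟩ := hμ.exists_hasEigenvector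
      have h0 : Sl2CasimirAux.P Ω c p x = 0 := hPtop x
      rw [Sl2CasimirAux.P_eig Ω c μ x hx.apply_eq_smul p] at h0
      have hprod : (∏ k ∈ Finset.range (p+1), (μ - c k)) = 0 := by
        by_contra hne
        exact hx.right ((smul_eq_zero.mp h0).resolve_left hne)
      obtain ⟨k, hk, hk0⟩ := Finset.prod_eq_zero_iff.mp hprod
      refine ⟨k, Nat.lt_succ_iff.mp (Finset.mem_range.mp hk), ?_⟩
      have := sub_eq_zero.mp hk0
      simp only [hcdef] at this
      exact this
    · rintro ⟨k, hk, rfl⟩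
      apply Module.End.hasEigenvalue_of_hasEigenvector (x := s k)
      refine ⟨Module.End.mem_eigenspace_iff.mpr ?_, hs_ne k hk⟩
      exact hΩs k hk
  · rw [eq_top_iff]
    intro x _
    exact Sl2CasimirAux.mem_iSup_eigenspace Ω c hc_inj p x (hPtop x)
end
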